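/- For every real a ≥ 3 and every real y with |y| ≤ 2π, one has |f_a(-a - 6·ln a + iy)| = a⁻⁵·√((1 + 6·ln a)² + y²) < (a - 1)/2. (Thus f_a maps the left vertical boundary of the pseudo-rectangle V_a strictly inside the disc of radius (a-1)/2 about the origin.) -/

import Mathlib

/-- For every real `a ≥ 3` and every real `y` with `|y| ≤ 2π`, one has
`|f_a(-a - 6 ln a + iy)| = a⁻⁵ √((1 + 6 ln a)² + y²) < (a - 1)/2`. -/
theorem stmt_6 (a : ℝ) (ha : 3 ≤ a) (y : ℝ) (hy : |y| ≤ 2 * Real.pi) :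
    ‖(fun z : ℂ => (a : ℂ) * (z - (1 - (a : ℂ))) * Complex.exp (z + (a : ℂ)))
        (((-a - 6 * Real.log a : ℝ) : ℂ) + (y : ℂ) * Complex.I)‖
      = (a ^ 5)⁻¹ * Real.sqrt ((1 + 6 * Real.log a) ^ 2 + y ^ 2) ∧
    (a ^ 5)⁻¹ * Real.sqrt ((1 + 6 * Real.log a) ^ 2 + y ^ 2) < (a - 1) / 2 := by
  have ha0 : (0:ℝ) < a := by linarith
  set L := Real.log a with hLdef
  have hL : 0 ≤ L := Real.log_nonneg (by linarith)
  constructor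
  · simp only []
    rw [norm_mul, norm_mul, Complex.norm_exp]
    have hre : ((((-a - 6 * L : ℝ) : ℂ) + (y : ℂ) * Complex.I) + (a : ℂ)).re = -(6*L) := by
      simp; ring
    rw [hre]
    have habs : ‖(((-a - 6 * L : ℝ) : ℂ) + (y : ℂ) * Complex.I) - (1 - (a:ℂ))‖
        = Real.sqrt ((1 + 6 * L) ^ 2 + y ^ 2) := by
      rw [Complex.norm_def, Complex.normSq_apply]
      congr 1
      simp
      ring
    rw [habs, Complex.norm_real, Real.norm_eq_abs, abs_of_pos ha0]
    have hexp : Real.exp (-(6*L)) = (a^6)⁻¹ := by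
      rw [Real.exp_neg]
      congr 1
      rw [show (6:ℝ)*L = (6:ℕ)*L by norm_num, Real.exp_nat_mul, Real.exp_log ha0]
    rw [hexp]
    have : a * (a^6)⁻¹ = (a^5)⁻¹ := by
      field_simp
    rw [mul_right_comm, this]
  · have hlog : L ≤ a - 1 := by
      have := Real.log_le_sub_one_of_pos ha0
      linarith
    have hpi : (2:ℝ) * Real.pi ≤ 8 := by
      have := Real.pi_le_four
      linarith
    have hsq : Real.sqrt ((1 + 6 * L) ^ 2 + y ^ 2) ≤ (1 + 6*L) + 8 := by
      have h1 : Real.sqrt ((1 + 6 * L) ^ 2 + y ^ 2) ≤ |1 + 6*L| + |y| := by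
        have := Real.sqrt_le_sqrt (show (1 + 6 * L) ^ 2 + y ^ 2 ≤ (|1+6*L| + |y|)^2 by
          nlinarith [sq_abs y, sq_abs (1+6*L), abs_nonneg y, abs_nonneg (1+6*L), mul_nonneg (abs_nonneg (1+6*L)) (abs_nonneg y)])
        rwa [Real.sqrt_sq (by positivity)] at this
      have : |1 + 6*L| = 1 + 6*L := abs_of_nonneg (by linarith)
      linarith
    have h8a : (1 + 6*L) + 8 ≤ 8 * a := by linarith
    have key : Real.sqrt ((1 + 6 * L) ^ 2 + y ^ 2) ≤ 8 * a := le_trans hsq h8a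
    have ha5 : (0:ℝ) < a^5 := by positivity
    rw [inv_mul_lt_iff₀ ha5]
    have h81 : (81:ℝ) ≤ a^4 := by nlinarith [sq_nonneg (a-3), sq_nonneg a, sq_nonneg (a^2-9)]
    have h81a : 81 * a ≤ a^5 := by nlinarith [mul_le_mul_of_nonneg_left h81 (le_of_lt ha0)]
    have : (8:ℝ) * a < (a-1)/2 * a^5 := by nlinarith [ha5]
    linarith
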